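/- For any p ∈ [0,1] and any δ ∈ [0,1], the KL-divergence between Bernoulli((1-δ)p) and Bernoulli(p) is at least δ²p/2. -/

import Mathlib

/-- KL-divergence (natural logarithm) between `Bernoulli p` and `Bernoulli q`,
valued in `EReal` so that the divergence is `⊤` when absolute continuity fails. -/
noncomputable def klBern (p q : ℝ) : EReal :=
  if (0 < p ∧ q = 0) ∨ (p < 1 ∧ q = 1) then ⊤
  else ((p * Real.log (p / q) + (1 - p) * Real.log ((1 - p) / (1 - q)) : ℝ) : EReal)

lemma aux_hasDerivAt (t : ℝ) (ht : t ≠ 0) :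
    HasDerivAt (fun t : ℝ => t * Real.log t + 1 - t - (1 - t)^2 / 2)
      (Real.log t + 1 - t) t := by
  have h1 : HasDerivAt (fun t : ℝ => t * Real.log t) (Real.log t + 1) t :=
    Real.hasDerivAt_mul_log ht
  have h2 := (((h1.add_const 1).sub (hasDerivAt_id' t)).sub
      ((((hasDerivAt_const t (1:ℝ)).sub (hasDerivAt_id' t)).pow 2).div_const 2))
  refine h2.congr_deriv ?_
  push_cast
  simp only [Pi.sub_apply]
  ring

lemma aux_key (x : ℝ) (hx0 : 0 ≤ x) (hx1 : x ≤ 1) :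
    (1 - x)^2 / 2 ≤ x * Real.log x + 1 - x := by
  rcases eq_or_lt_of_le hx0 with h0 | h0
  · simp [← h0]; norm_num
  set g : ℝ → ℝ := fun t : ℝ => t * Real.log t + 1 - t - (1 - t)^2 / 2 with hg
  have hanti : AntitoneOn g (Set.Icc x 1) := by
    apply antitoneOn_of_deriv_nonpos (convex_Icc x 1)
    · apply ContinuousOn.sub
      · apply ContinuousOn.sub
        · apply ContinuousOn.add
          · exact ContinuousOn.mul continuousOn_id
              (Real.continuousOn_log.mono (by
                intro t ht
                simp only [Set.mem_Icc] at ht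
                simp only [Set.mem_compl_iff, Set.mem_singleton_iff]
                linarith [ht.1]))
          · exact continuousOn_const
        · exact continuousOn_id
      · exact Continuous.continuousOn (by continuity)
    · intro t ht
      rw [interior_Icc] at ht
      exact (aux_hasDerivAt t (by linarith [ht.1])).differentiableAt.differentiableWithinAt
    · intro t ht
      rw [interior_Icc] at ht
      rw [(aux_hasDerivAt t (by linarith [ht.1])).deriv]
      have := Real.log_le_sub_one_of_pos (show (0:ℝ) < t by linarith [ht.1])
      linarith
  have h := hanti (Set.mem_Icc.mpr ⟨le_refl x, hx1⟩) (Set.mem_Icc.mpr ⟨hx1, le_refl 1⟩) hx1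
  simp only [hg, Real.log_one] at h
  nlinarith [h]

lemma aux_log_lb (r : ℝ) (hr : 0 < r) : 1 - r⁻¹ ≤ Real.log r := by
  have := Real.log_le_sub_one_of_pos (inv_pos.mpr hr)
  rw [Real.log_inv] at this
  linarith

/-- For any `p ∈ [0,1]` and `δ ∈ [0,1]`,
`D(Bernoulli((1-δ)p) || Bernoulli(p)) ≥ δ² p / 2`. -/
theorem klBern_one_sub_ge (p δ : ℝ) (hp : p ∈ Set.Icc (0:ℝ) 1)
    (hδ : δ ∈ Set.Icc (0:ℝ) 1) :
    ((δ ^ 2 * p / 2 : ℝ) : EReal) ≤ klBern ((1 - δ) * p) p := by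
  obtain ⟨hp0, hp1⟩ := hp
  obtain ⟨hδ0, hδ1⟩ := hδ
  unfold klBern
  split_ifs with h
  · exact le_top
  · rw [EReal.coe_le_coe_iff]
    push_neg at h
    set q : ℝ := (1 - δ) * p with hq
    rcases eq_or_lt_of_le hp0 with hp0' | hp0'
    · -- p = 0
      simp [hq, ← hp0']
    rcases eq_or_lt_of_le hp1 with hp1' | hp1'
    · -- p = 1
      have hq1 : (1:ℝ) ≤ q := le_of_not_gt (fun hlt => h.2 hlt hp1')
      have hδ0' : δ = 0 := by nlinarith [hq]
      simp [hq, hδ0', hp1']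
    · -- 0 < p < 1
      have hqp : q ≤ p := by nlinarith
      have hq0 : 0 ≤ q := by nlinarith
      have h1q : 0 < 1 - q := by linarith
      have h1p : 0 < 1 - p := by linarith
      have key1 : q * Real.log (q / p) = p * ((1 - δ) * Real.log (1 - δ)) := by
        have : q / p = 1 - δ := by
          field_simp [hq]
          rw [hq]; ring
        rw [this, hq]; ring
      have key2 : p - q ≤ (1 - q) * Real.log ((1 - q) / (1 - p)) := by
        have hr : (0:ℝ) < (1 - q) / (1 - p) := div_pos h1q h1p
        have hlb := aux_log_lb _ hr
        have hinv : ((1 - q) / (1 - p))⁻¹ = (1 - p) / (1 - q) := by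
          rw [inv_div]
        rw [hinv] at hlb
        have := mul_le_mul_of_nonneg_left hlb (le_of_lt h1q)
        have heq : (1 - q) * (1 - (1 - p) / (1 - q)) = p - q := by
          field_simp
          ring
        linarith [heq ▸ this]
      have key3 : (1 - (1 - δ))^2 / 2 ≤ (1 - δ) * Real.log (1 - δ) + 1 - (1 - δ) := by
        exact aux_key (1 - δ) (by linarith) (by linarith)
      have hδδ : (1 - (1 - δ)) = δ := by ring
      rw [hδδ] at key3
      rw [key1]
      nlinarith [mul_le_mul_of_nonneg_left key3 (le_of_lt hp0')]
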